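/- In the setting of Proposition 1 (Ψ(u) = u^{1+α}L(u), v(t) as above), fix λ > 0 and let f(t) ∼ v(t); define s = s(t) by v(s) = λ f(t). Then s(t)·λ^α ∼ t as t → ∞, and log(v(t+s)/v(t)) → −(1/α)·log(1 + λ^{−α}) as t → ∞; consequently v(t+s)/v(t) → (1 + λ^{−α})^{−1/α}. -/

import Mathlib

open Set Filter

lemma mono_bound (φ ε : ℝ → ℝ) (T δ : ℝ) (hT : 0 < T)
    (hφ : ∀ r ∈ Ici T, HasDerivAt φ (-(ε r) / r) r)
    (hε : ∀ r ∈ Ici T, |ε r| ≤ δ) :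
    ∀ t₁ ∈ Ici T, ∀ t₂, t₁ ≤ t₂ →
      |φ t₂ - φ t₁| ≤ δ * (Real.log t₂ - Real.log t₁) := by
  have hrpos : ∀ r ∈ Ici T, (0:ℝ) < r := fun r hr => hT.trans_le hr
  have key : ∀ c : ℝ, c = 1 ∨ c = -1 →
      MonotoneOn (fun r => δ * Real.log r + c * φ r) (Ici T) := by
    intro c hc
    have hder : ∀ x ∈ Ici T, HasDerivAt (fun r => δ * Real.log r + c * φ r)
        (δ * x⁻¹ + c * (-(ε x) / x)) x := fun x hx =>
      ((Real.hasDerivAt_log (hrpos x hx).ne').const_mul δ).add ((hφ x hx).const_mul c)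
    apply monotoneOn_of_hasDerivWithinAt_nonneg (convex_Ici T)
      (f' := fun x => δ * x⁻¹ + c * (-(ε x) / x))
    · exact fun x hx => (hder x hx).continuousAt.continuousWithinAt
    · intro x hx
      rw [interior_Ici] at hx
      exact (hder x (Set.mem_Ici.mpr (Set.mem_Ioi.mp hx).le)).hasDerivWithinAt
    · intro x hx
      rw [interior_Ici] at hx
      have hx0 := hrpos x (Set.mem_Ici.mpr (Set.mem_Ioi.mp hx).le)
      have h1 := abs_le.mp (hε x (Set.mem_Ici.mpr (Set.mem_Ioi.mp hx).le))
      rcases hc with h | h <;> subst h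
      · have : δ * x⁻¹ + 1 * (-(ε x) / x) = (δ - ε x) / x := by field_simp; ring
        rw [this]; apply div_nonneg (by linarith) hx0.le
      · have : δ * x⁻¹ + (-1) * (-(ε x) / x) = (δ + ε x) / x := by field_simp
        rw [this]; apply div_nonneg (by linarith) hx0.le
  intro t₁ ht₁ t₂ h12
  have ht₂ : t₂ ∈ Ici T := le_trans ht₁ h12
  have hp := key 1 (Or.inl rfl) ht₁ ht₂ h12
  have hm := key (-1) (Or.inr rfl) ht₁ ht₂ h12
  simp only [one_mul, neg_one_mul] at hp hm
  rw [abs_le]; constructor <;> linarith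

lemma approx_tendsto (A B : ℝ → ℝ) (c : ℝ) (hA : Tendsto A atTop (nhds c))
    (h : ∀ δ > (0:ℝ), ∀ᶠ t in atTop, |A t - B t| ≤ δ * (|A t| + |B t|)) :
    Tendsto B atTop (nhds c) := by
  have hAbd : ∀ᶠ t in atTop, |A t| ≤ |c| + 1 := by
    filter_upwards [Metric.tendsto_nhds.mp hA 1 one_pos] with t ht
    have := abs_sub_abs_le_abs_sub (A t) c
    rw [Real.dist_eq] at ht; linarith
  have hBbd : ∀ᶠ t in atTop, |B t| ≤ 3 * |c| + 3 := by
    filter_upwards [hAbd, h (1/2) (by norm_num)] with t h1 h2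
    have := abs_sub_abs_le_abs_sub (B t) (A t)
    rw [abs_sub_comm (B t) (A t)] at this
    linarith
  have hdiff : Tendsto (fun t => B t - A t) atTop (nhds 0) := by
    rw [NormedAddCommGroup.tendsto_nhds_zero]
    intro η hη
    have hδ : (0:ℝ) < η / (4 * |c| + 5) := by positivity
    filter_upwards [hAbd, hBbd, h _ hδ] with t h0 h1 h2
    have h3 : η / (4 * |c| + 5) * (|A t| + |B t|) ≤ η / (4 * |c| + 5) * (4 * |c| + 4) :=
      mul_le_mul_of_nonneg_left (by linarith) hδ.le
    have h4 : η / (4 * |c| + 5) * (4 * |c| + 4) < η := by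
      rw [div_mul_eq_mul_div, div_lt_iff₀ (by positivity)]
      nlinarith [abs_nonneg c, hη]
    have : ‖B t - A t‖ = |A t - B t| := by rw [Real.norm_eq_abs, abs_sub_comm]
    rw [this]; linarith
  have := hdiff.add hA
  simpa using this

theorem critical_rescaling_limit (α : ℝ) (hα : α ∈ Set.Ioc (0:ℝ) 1)
    (L : ℝ → ℝ) (hLcont : ContinuousOn L (Set.Ioi (0:ℝ)))
    (hLpos : ∀ x > (0:ℝ), 0 < L x)
    (hLslow : ∀ a > (0:ℝ),
      Tendsto (fun x => L (a * x) / L x) (nhdsWithin 0 (Set.Ioi 0)) (nhds 1))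
    (Ψ : ℝ → ℝ) (hΨ : ∀ x > (0:ℝ), Ψ x = x ^ ((1:ℝ) + α) * L x)
    (v : ℝ → ℝ) (hvpos : ∀ r > (0:ℝ), 0 < v r)
    (hvanti : StrictAntiOn v (Set.Ioi (0:ℝ)))
    (hode : ∀ r > (0:ℝ), HasDerivAt v (-Ψ (v r)) r)
    (hvasym : Tendsto (fun r => (v r) ^ α * L (v r) * (α * r)) atTop (nhds 1))
    (f : ℝ → ℝ) (hfpos : ∀ t > (0:ℝ), 0 < f t)
    (hfv : Tendsto (fun t => f t / v t) atTop (nhds 1))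
    (l : ℝ) (hl : 0 < l)
    (s : ℝ → ℝ) (hs : ∀ t > (0:ℝ), 0 < s t ∧ v (s t) = l * f t)
    (hsinf : Tendsto s atTop atTop) :
    Tendsto (fun t => s t * l ^ α / t) atTop (nhds 1) ∧
    Tendsto (fun t => Real.log (v (t + s t) / v t)) atTop
      (nhds (-(1/α) * Real.log (1 + l ^ (-α)))) ∧
    Tendsto (fun t => v (t + s t) / v t) atTop
      (nhds ((1 + l ^ (-α)) ^ (-(1/α)))) := by
  obtain ⟨hα0, hα1⟩ := hα
  set E : ℝ → ℝ := fun r => (v r) ^ α * L (v r) * (α * r) - 1 with hE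
  set φ : ℝ → ℝ := fun x => α * Real.log (v x) + Real.log x with hφdef
  -- derivative of φ
  have hφder : ∀ r > (0:ℝ), HasDerivAt φ (-(E r) / r) r := by
    intro r hr
    have hv0 := hvpos r hr
    have hvd := hode r hr
    rw [hΨ (v r) hv0] at hvd
    have hlogv : HasDerivAt (fun x => Real.log (v x))
        (-((v r) ^ ((1:ℝ) + α) * L (v r)) / v r) r := hvd.log hv0.ne'
    have hd : HasDerivAt φ
        (α * (-((v r) ^ ((1:ℝ) + α) * L (v r)) / v r) + r⁻¹) r :=
      (hlogv.const_mul α).add (Real.hasDerivAt_log hr.ne')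
    convert hd using 1
    have hpow : (v r) ^ ((1:ℝ) + α) = v r * (v r) ^ α := by
      rw [Real.rpow_add hv0, Real.rpow_one]
    rw [hE, hpow]
    field_simp
    ring
  -- core estimate
  have core : ∀ δ > (0:ℝ), ∃ T, 0 < T ∧ ∀ t₁, T ≤ t₁ → ∀ t₂, t₁ ≤ t₂ →
      |φ t₂ - φ t₁| ≤ δ * (Real.log t₂ - Real.log t₁) := by
    intro δ hδ
    have hev : ∀ᶠ r in atTop, |E r| ≤ δ := by
      filter_upwards [Metric.tendsto_nhds.mp hvasym δ hδ] with r hr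
      rw [Real.dist_eq] at hr
      exact hr.le
    obtain ⟨T₀, hT₀⟩ := eventually_atTop.mp hev
    refine ⟨max T₀ 1, lt_of_lt_of_le one_pos (le_max_right _ _), ?_⟩
    intro t₁ ht₁ t₂ h12
    exact mono_bound φ E (max T₀ 1) δ (lt_of_lt_of_le one_pos (le_max_right _ _))
      (fun r hr => hφder r (lt_of_lt_of_le one_pos ((le_max_right T₀ 1).trans hr)))
      (fun r hr => hT₀ r ((le_max_left T₀ 1).trans hr)) t₁ ht₁ t₂ h12
  -- Part 1
  set A : ℝ → ℝ := fun t => α * (Real.log (v t) - Real.log (v (s t))) with hAdef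
  set B : ℝ → ℝ := fun t => Real.log (s t) - Real.log t with hBdef
  have hAlim : Tendsto A atTop (nhds (-(α * Real.log l))) := by
    have h0 : Tendsto (fun t => Real.log (f t / v t)) atTop (nhds 0) := by
      have := (Real.continuousAt_log one_ne_zero).tendsto.comp hfv
      simpa [Function.comp_def] using this
    have hlim : Tendsto (fun t => -(α * Real.log l) - α * Real.log (f t / v t))
        atTop (nhds (-(α * Real.log l))) := by
      have := (tendsto_const_nhds (x := -(α * Real.log l))).sub (h0.const_mul α)
      simpa using this
    apply hlim.congr'
    filter_upwards [eventually_gt_atTop 0] with t ht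
    have hft := hfpos t ht
    have hvt := hvpos t ht
    simp only [hAdef]
    rw [(hs t ht).2, Real.log_mul hl.ne' hft.ne', Real.log_div hft.ne' hvt.ne']
    ring
  have hcomp : ∀ δ > (0:ℝ), ∀ᶠ t in atTop, |A t - B t| ≤ δ * (|A t| + |B t|) := by
    intro δ hδ
    obtain ⟨T, hT, hcore⟩ := core δ hδ
    filter_upwards [eventually_ge_atTop T, hsinf.eventually (eventually_ge_atTop T),
      eventually_gt_atTop 0] with t htT hstT ht0
    have hst0 := (hs t ht0).1
    have hAabs : 0 ≤ |A t| := abs_nonneg _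
    rcases le_total t (s t) with hle | hle
    · have hb := hcore t htT (s t) hle
      have hφd : φ (s t) - φ t = B t - A t := by
        simp only [hφdef, hAdef, hBdef]; ring
      have hBnn : 0 ≤ B t :=
        sub_nonneg.2 (Real.log_le_log ht0 hle)
      rw [hφd] at hb
      rw [abs_sub_comm]
      calc |B t - A t| ≤ δ * (Real.log (s t) - Real.log t) := hb
        _ = δ * |B t| := by rw [abs_of_nonneg hBnn]
        _ ≤ δ * (|A t| + |B t|) := by nlinarith [abs_nonneg (B t)]
    · have hb := hcore (s t) hstT t hle
      have hφd : φ t - φ (s t) = A t - B t := by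
        simp only [hφdef, hAdef, hBdef]; ring
      have hBnp : B t ≤ 0 :=
        sub_nonpos.2 (Real.log_le_log hst0 hle)
      rw [hφd] at hb
      calc |A t - B t| ≤ δ * (Real.log t - Real.log (s t)) := hb
        _ = δ * |B t| := by rw [abs_of_nonpos hBnp]; simp only [hBdef]; try ring
        _ ≤ δ * (|A t| + |B t|) := by nlinarith [abs_nonneg (B t)]
  have hBlim : Tendsto B atTop (nhds (-(α * Real.log l))) :=
    approx_tendsto A B _ hAlim hcomp
  have hst : Tendsto (fun t => s t / t) atTop (nhds (l ^ (-α))) := by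
    have hexp := (Real.continuous_exp.tendsto _).comp hBlim
    have heq : Real.exp (-(α * Real.log l)) = l ^ (-α) := by
      rw [Real.rpow_def_of_pos hl]; ring_nf
    rw [heq] at hexp
    apply hexp.congr'
    filter_upwards [eventually_gt_atTop 0] with t ht
    have hst0 := (hs t ht).1
    simp only [Function.comp_apply, hBdef]
    rw [Real.exp_sub, Real.exp_log hst0, Real.exp_log ht]
  have goal1 : Tendsto (fun t => s t * l ^ α / t) atTop (nhds 1) := by
    have hmul := hst.mul_const (l ^ α)
    have hone : l ^ (-α) * l ^ α = 1 := by
      rw [← Real.rpow_add hl]; simp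
    rw [hone] at hmul
    exact hmul.congr (fun t => by ring)
  -- Part 2
  have hlpos : (0:ℝ) < l ^ (-α) := Real.rpow_pos_of_pos hl _
  have h1l : (0:ℝ) < 1 + l ^ (-α) := by linarith
  set A2 : ℝ → ℝ := fun t => α * (Real.log (v t) - Real.log (v (t + s t))) with hA2def
  set B2 : ℝ → ℝ := fun t => Real.log (t + s t) - Real.log t with hB2def
  have hB2lim : Tendsto B2 atTop (nhds (Real.log (1 + l ^ (-α)))) := by
    have hq : Tendsto (fun t => 1 + s t / t) atTop (nhds (1 + l ^ (-α))) :=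
      tendsto_const_nhds.add hst
    have hc := (Real.continuousAt_log h1l.ne').tendsto.comp hq
    apply hc.congr'
    filter_upwards [eventually_gt_atTop 0] with t ht
    have hst0 := (hs t ht).1
    have hts : (0:ℝ) < t + s t := by linarith
    simp only [Function.comp_apply, hB2def]
    rw [← Real.log_div hts.ne' ht.ne']
    congr 1
    field_simp
  have hcomp2 : ∀ δ > (0:ℝ), ∀ᶠ t in atTop, |B2 t - A2 t| ≤ δ * (|B2 t| + |A2 t|) := by
    intro δ hδ
    obtain ⟨T, hT, hcore⟩ := core δ hδ
    filter_upwards [eventually_ge_atTop T, eventually_gt_atTop 0] with t htT ht0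
    have hst0 := (hs t ht0).1
    have hle : t ≤ t + s t := by linarith
    have hb := hcore t htT (t + s t) hle
    have hφd : φ (t + s t) - φ t = B2 t - A2 t := by
      simp only [hφdef, hA2def, hB2def]; ring
    have hBnn : 0 ≤ B2 t := sub_nonneg.2 (Real.log_le_log ht0 hle)
    rw [hφd] at hb
    calc |B2 t - A2 t| ≤ δ * (Real.log (t + s t) - Real.log t) := hb
      _ = δ * |B2 t| := by rw [abs_of_nonneg hBnn]
      _ ≤ δ * (|B2 t| + |A2 t|) := by nlinarith [abs_nonneg (A2 t), abs_nonneg (B2 t)]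
  have hA2lim : Tendsto A2 atTop (nhds (Real.log (1 + l ^ (-α)))) :=
    approx_tendsto B2 A2 _ hB2lim hcomp2
  have goal2 : Tendsto (fun t => Real.log (v (t + s t) / v t)) atTop
      (nhds (-(1/α) * Real.log (1 + l ^ (-α)))) := by
    have hmul := hA2lim.const_mul (-(1/α))
    apply hmul.congr'
    filter_upwards [eventually_gt_atTop 0] with t ht
    have hst0 := (hs t ht).1
    have hts : (0:ℝ) < t + s t := by linarith
    have hv1 := hvpos t ht
    have hv2 := hvpos (t + s t) hts
    rw [Real.log_div hv2.ne' hv1.ne']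
    show -(1/α) * (α * (Real.log (v t) - Real.log (v (t + s t)))) = _
    field_simp
    ring
  have goal3 : Tendsto (fun t => v (t + s t) / v t) atTop
      (nhds ((1 + l ^ (-α)) ^ (-(1/α)))) := by
    have hexp := (Real.continuous_exp.tendsto _).comp goal2
    have heq : Real.exp (-(1/α) * Real.log (1 + l ^ (-α))) = (1 + l ^ (-α)) ^ (-(1/α)) := by
      rw [Real.rpow_def_of_pos h1l]; ring_nf
    rw [heq] at hexp
    apply hexp.congr'
    filter_upwards [eventually_gt_atTop 0] with t ht
    have hst0 := (hs t ht).1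
    have hts : (0:ℝ) < t + s t := by linarith
    have hv1 := hvpos t ht
    have hv2 := hvpos (t + s t) hts
    simp only [Function.comp_apply]
    rw [Real.exp_log (div_pos hv2 hv1)]
  exact ⟨goal1, goal2, goal3⟩
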